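/- Let P be a sub-uniform random variable with P > 0 almost surely. If E[−log P] = 1 (= E[−log U] for U uniform on [0,1]), then P is uniformly distributed on [0,1]. -/

import Mathlib

open MeasureTheory Set

lemma convexOn_affine (a b : ℝ) : ConvexOn ℝ Set.univ (fun x : ℝ => a*x + b) := by
  refine ⟨convex_univ, fun x _ y _ c d hc hd hcd => ?_⟩
  simp only [smul_eq_mul]
  have : a * (c * x + d * y) + b = c * (a * x + b) + d * (a * y + b) := by
    have : b = (c + d) * b := by rw [hcd]; ring
    nlinarith [this]
  linarith [this.le]

lemma convexOn_wedge (t : ℝ) : ConvexOn ℝ Set.univ (fun x : ℝ => max (t - x) 0) := by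
  have h := (convexOn_affine (-1) t).sup (convexOn_affine 0 0)
  convert h using 2 with x
  · rfl
  · rfl
  simp only [Pi.sup_apply, zero_mul, add_zero, neg_one_mul]
  show max (t - x) 0 = max (-x + t) 0
  ring_nf

lemma integral_id_Icc : ∫ u in Icc (0:ℝ) 1, u = 1/2 := by
  rw [MeasureTheory.integral_Icc_eq_integral_Ioc,
    ← intervalIntegral.integral_of_le (by norm_num : (0:ℝ) ≤ 1)]
  rw [integral_id]
  norm_num

lemma wedge_integral_Icc {t : ℝ} (ht0 : 0 ≤ t) (ht1 : t ≤ 1) :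
    ∫ u in Icc (0:ℝ) 1, max (t - u) 0 = t^2/2 := by
  rw [MeasureTheory.integral_Icc_eq_integral_Ioc,
    ← intervalIntegral.integral_of_le (by norm_num : (0:ℝ) ≤ 1),
    ← intervalIntegral.integral_add_adjacent_intervals
      (a := 0) (b := t) (c := 1) (f := fun u => max (t - u) 0)]
  · have h1 : ∫ u in (0:ℝ)..t, max (t - u) 0 = ∫ u in (0:ℝ)..t, (t - u) := by
      apply intervalIntegral.integral_congr
      intro u hu
      rw [uIcc_of_le ht0] at hu
      exact max_eq_left (by linarith [hu.2])
    have h2 : ∫ u in t..(1:ℝ), max (t - u) 0 = ∫ u in t..(1:ℝ), (0:ℝ) := by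
      apply intervalIntegral.integral_congr
      intro u hu
      rw [uIcc_of_le ht1] at hu
      exact max_eq_right (by linarith [hu.1])
    rw [h1, h2]
    rw [intervalIntegral.integral_sub intervalIntegrable_const intervalIntegral.intervalIntegrable_id]
    simp [integral_id]
    ring
  · exact (continuous_const.sub continuous_id').max continuous_const |>.intervalIntegrable _ _
  · exact (continuous_const.sub continuous_id').max continuous_const |>.intervalIntegrable _ _

lemma log_repr {x : ℝ} (hx : 0 < x) (hx1 : x ≤ 1) :
    IntegrableOn (fun t => max (t - x) 0 / t^2) (Ioo 0 1) volume ∧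
    ∫ t in Ioo (0:ℝ) 1, max (t - x) 0 / t^2 = x - Real.log x - 1 := by
  have hcont : ContinuousOn (fun t : ℝ => max (t - x) 0 / t^2) (Icc x 1) := by
    apply ContinuousOn.div
    · exact ((continuous_id.sub continuous_const).max continuous_const).continuousOn
    · exact (continuous_pow 2).continuousOn
    · intro t ht
      exact pow_ne_zero 2 (ne_of_gt (lt_of_lt_of_le hx ht.1))
  have hzero : EqOn (fun t : ℝ => max (t - x) 0 / t^2) 0 (Ioo 0 x) := by
    intro t ht
    simp [max_eq_right (by linarith [ht.2] : t - x ≤ 0)]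
  have hsplit : Ioo (0:ℝ) 1 = Ioo 0 x ∪ Ico x 1 := by
    ext u
    simp only [mem_union, mem_Ioo, mem_Ico]
    constructor
    · rintro ⟨h1, h2⟩
      rcases lt_or_ge u x with h | h
      · exact Or.inl ⟨h1, h⟩
      · exact Or.inr ⟨h, h2⟩
    · rintro (⟨h1, h2⟩ | ⟨h1, h2⟩) <;> constructor <;> linarith
  have hdisj : Disjoint (Ioo (0:ℝ) x) (Ico x 1) :=
    Set.disjoint_left.mpr fun t h1 h2 => absurd h1.2 (not_lt.mpr h2.1)
  have hi1 : IntegrableOn (fun t => max (t - x) 0 / t^2) (Ioo 0 x) volume :=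
    (integrableOn_congr_fun hzero measurableSet_Ioo).mpr (integrableOn_zero)
  have hi2 : IntegrableOn (fun t => max (t - x) 0 / t^2) (Ico x 1) volume :=
    (hcont.integrableOn_Icc).mono_set Ico_subset_Icc_self
  constructor
  · rw [hsplit]
    exact hi1.union hi2
  rw [hsplit, setIntegral_union hdisj measurableSet_Ico hi1 hi2]
  rw [setIntegral_congr_fun measurableSet_Ioo hzero]
  simp only [integral_zero, Pi.zero_apply, zero_add]
  have : ∫ t in Ico x 1, max (t - x) 0 / t^2 = ∫ t in x..1, max (t - x) 0 / t^2 := by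
    rw [MeasureTheory.integral_Ico_eq_integral_Ioo,
      intervalIntegral.integral_of_le hx1, MeasureTheory.integral_Ioc_eq_integral_Ioo]
  rw [this]
  have hftc : ∫ t in x..1, max (t - x) 0 / t^2
      = (Real.log 1 + x/1) - (Real.log x + x/x) := by
    refine intervalIntegral.integral_eq_sub_of_hasDerivAt (f := fun t => Real.log t + x / t) ?_ ?_
    · intro t ht
      rw [uIcc_of_le hx1] at ht
      have htpos : 0 < t := lt_of_lt_of_le hx ht.1
      have h1 : HasDerivAt Real.log t⁻¹ t := Real.hasDerivAt_log (ne_of_gt htpos)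
      have h2 : HasDerivAt (fun t : ℝ => x / t) (x * -(t^2)⁻¹) t := by
        simpa [div_eq_mul_inv] using (hasDerivAt_inv (ne_of_gt htpos)).const_mul x
      have := h1.add h2
      convert this using 1
      · rfl
      rw [max_eq_left (by linarith [ht.1] : 0 ≤ t - x)]
      field_simp
      ring
    · exact (hcont.mono (by rw [uIcc_of_le hx1])).intervalIntegrable
  rw [hftc]
  rw [Real.log_one, div_self (ne_of_gt hx)]
  ring

lemma aux2 (ν : Measure ℝ) [IsProbabilityMeasure ν]
    (hae : ∀ᵐ x ∂ν, x ∈ Ioc (0:ℝ) 1)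
    (hWint : ∀ t : ℝ, Integrable (fun x => max (t - x) 0) ν)
    (hidint : Integrable (fun x : ℝ => x) ν)
    (hlogint : Integrable (fun x => -Real.log x) ν)
    (hmean : ∫ x, x ∂ν = 1/2)
    (hlog : ∫ x, -Real.log x ∂ν = 1) :
    ∫⁻ t in Ioo (0:ℝ) 1, ENNReal.ofReal ((∫ x, max (t - x) 0 ∂ν) / t^2)
      = ENNReal.ofReal (1/2) := by
  have hfmeas : Measurable (Function.uncurry fun x t : ℝ =>
      ENNReal.ofReal (max (t - x) 0 / t^2)) := by
    apply Measurable.ennreal_ofReal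
    exact ((measurable_snd.sub measurable_fst).max measurable_const).div
      (measurable_snd.pow_const 2)
  have hswap := lintegral_lintegral_swap (μ := ν) (ν := volume.restrict (Ioo 0 1))
    hfmeas.aemeasurable
  have hLHS : ∫⁻ x, ∫⁻ t in Ioo (0:ℝ) 1, ENNReal.ofReal (max (t - x) 0 / t^2) ∂volume ∂ν
      = ENNReal.ofReal (1/2) := by
    have h1 : ∀ᵐ x ∂ν, (∫⁻ t in Ioo (0:ℝ) 1, ENNReal.ofReal (max (t - x) 0 / t^2) ∂volume)
        = ENNReal.ofReal (x - Real.log x - 1) := by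
      filter_upwards [hae] with x hx
      obtain ⟨hi, hv⟩ := log_repr hx.1 hx.2
      rw [← ofReal_integral_eq_lintegral_ofReal hi
        (Filter.Eventually.of_forall fun t => div_nonneg (le_max_right _ _) (sq_nonneg t)), hv]
    rw [lintegral_congr_ae h1]
    have hint3 : Integrable (fun x : ℝ => x - Real.log x - 1) ν := by
      have : (fun x : ℝ => x - Real.log x - 1) = fun x => x + (-Real.log x) - 1 := by
        funext x; ring
      rw [this]
      exact (hidint.add hlogint).sub (integrable_const 1)
    have hnn : 0 ≤ᵐ[ν] fun x => x - Real.log x - 1 := by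
      filter_upwards [hae] with x hx
      have := Real.log_le_sub_one_of_pos hx.1
      simp only [Pi.zero_apply]
      linarith
    rw [← ofReal_integral_eq_lintegral_ofReal hint3 hnn]
    congr 1
    have : (fun x : ℝ => x - Real.log x - 1) = fun x => x + (-Real.log x) - 1 := by
      funext x; ring
    have hadd : Integrable (fun x : ℝ => x + -Real.log x) ν := hidint.add hlogint
    rw [this, integral_sub hadd (integrable_const 1),
      integral_add hidint hlogint, hmean, hlog, integral_const]
    simp
  have hRHS : ∀ᵐ t ∂(volume.restrict (Ioo (0:ℝ) 1)),
      (∫⁻ x, ENNReal.ofReal (max (t - x) 0 / t^2) ∂ν)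
        = ENNReal.ofReal ((∫ x, max (t - x) 0 ∂ν) / t^2) := by
    refine Filter.Eventually.of_forall fun t => ?_
    rw [← ofReal_integral_eq_lintegral_ofReal ((hWint t).div_const (t^2))
      (Filter.Eventually.of_forall fun x => div_nonneg (le_max_right _ _) (sq_nonneg t)),
      integral_div]
  rw [← lintegral_congr_ae hRHS, ← hswap, hLHS]

lemma aux3 (W : ℝ → ℝ) (hWcont : Continuous W) (hWnonneg : ∀ t, 0 ≤ W t)
    (hW : ∀ t ∈ Icc (0:ℝ) 1, W t ≤ t^2/2)
    (key1 : ∫⁻ t in Ioo (0:ℝ) 1, ENNReal.ofReal (W t / t^2) = ENNReal.ofReal (1/2)) :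
    ∀ t ∈ Ioo (0:ℝ) 1, W t = t^2/2 := by
  have hconst : ∫⁻ _t in Ioo (0:ℝ) 1, ENNReal.ofReal (1/2) ∂volume = ENNReal.ofReal (1/2) := by
    rw [setLIntegral_const, Real.volume_Ioo]
    norm_num
  have hle : ∀ t ∈ Ioo (0:ℝ) 1, W t / t^2 ≤ 1/2 := by
    intro t ht
    have h2 : (0:ℝ) < t^2 := pow_pos ht.1 2
    rw [div_le_iff₀ h2]
    calc W t ≤ t^2/2 := hW t ⟨ht.1.le, ht.2.le⟩
      _ = 1/2 * t^2 := by ring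
  have hfm : Measurable fun t => ENNReal.ofReal (W t / t^2) :=
    ((hWcont.measurable).div (measurable_id.pow_const 2)).ennreal_ofReal
  -- lintegral of difference is zero
  have hsub : ∫⁻ t in Ioo (0:ℝ) 1,
      (ENNReal.ofReal (1/2) - ENNReal.ofReal (W t / t^2)) = 0 := by
    rw [lintegral_sub hfm (by rw [key1]; exact ENNReal.ofReal_ne_top)
      (ae_restrict_of_ae_restrict_of_subset (subset_refl _)
        ((ae_restrict_iff' measurableSet_Ioo).mpr (Filter.Eventually.of_forall fun t ht =>
          ENNReal.ofReal_le_ofReal (hle t ht)))), key1, hconst, tsub_self]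
  have hz := (lintegral_eq_zero_iff (measurable_const.sub hfm)).mp hsub
  rw [Filter.EventuallyEq, ae_restrict_iff' measurableSet_Ioo] at hz
  -- upgrade to everywhere by continuity
  intro t₀ ht₀
  by_contra hne
  set g : ℝ → ℝ := fun t => t^2/2 - W t with hg
  have hgcont : Continuous g := ((continuous_pow 2).div_const 2).sub hWcont
  have hopen : IsOpen (Ioo (0:ℝ) 1 ∩ g ⁻¹' ({0}ᶜ)) :=
    isOpen_Ioo.inter (isOpen_compl_singleton.preimage hgcont)
  have hmem : t₀ ∈ Ioo (0:ℝ) 1 ∩ g ⁻¹' ({0}ᶜ) := by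
    refine ⟨ht₀, ?_⟩
    simp only [mem_preimage, mem_compl_iff, mem_singleton_iff, hg]
    intro h
    exact hne (by linarith [sub_eq_zero.mp h])
  have hposvol : 0 < volume (Ioo (0:ℝ) 1 ∩ g ⁻¹' ({0}ᶜ)) :=
    hopen.measure_pos volume ⟨t₀, hmem⟩
  have hnull : volume (Ioo (0:ℝ) 1 ∩ g ⁻¹' ({0}ᶜ)) = 0 := by
    rw [ae_iff] at hz
    refine measure_mono_null (fun t htm => ?_) hz
    obtain ⟨ht, hgt⟩ := htm
    simp only [mem_preimage, mem_compl_iff, mem_singleton_iff] at hgt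
    simp only [mem_setOf_eq, Pi.zero_apply]
    push_neg
    refine ⟨ht, fun h0 => ?_⟩
    have ht2 : (0:ℝ) < t^2 := pow_pos ht.1 2
    have hge : (1:ℝ)/2 ≤ W t / t^2 :=
      (ENNReal.ofReal_le_ofReal_iff (div_nonneg (hWnonneg t) (sq_nonneg t))).mp
        (tsub_eq_zero_iff_le.mp h0)
    have heq : W t / t^2 = 1/2 := le_antisymm (hle t ht) hge
    apply hgt
    rw [hg]
    have : W t = t^2/2 := by
      field_simp at heq
      rw [div_eq_iff ht2.ne'] at heq
      linarith
    simp [this]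
  rw [hnull] at hposvol
  exact lt_irrefl _ hposvol

lemma aux4 (ν : Measure ℝ) [IsProbabilityMeasure ν]
    (hWint : ∀ t : ℝ, Integrable (fun x => max (t - x) 0) ν)
    (hWeq : ∀ t ∈ Ioo (0:ℝ) 1, ∫ x, max (t - x) 0 ∂ν = t^2/2) :
    ∀ t ∈ Ioo (0:ℝ) 1, (ν (Iic t)).toReal = t := by
  set W : ℝ → ℝ := fun t => ∫ x, max (t - x) 0 ∂ν with hWdef
  set F : ℝ → ℝ := fun t => (ν (Iic t)).toReal with hFdef
  have hIi : ∀ t h : ℝ, ∫ x, (Iic t).indicator (fun _ => h) x ∂ν = h * F t := by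
    intro t h
    rw [integral_indicator_const h measurableSet_Iic, smul_eq_mul, mul_comm]
    rfl
  have hind_int : ∀ t h : ℝ, Integrable ((Iic t).indicator fun _ : ℝ => h) ν :=
    fun t h => (integrable_const h).indicator measurableSet_Iic
  have hFub : ∀ t h : ℝ, 0 < h →
      W t - W (t - h) ≤ h * F t ∧ h * F t ≤ W (t + h) - W t := by
    intro t h hh
    constructor
    · have hpt : ∀ x, max (t - x) 0 - max (t - h - x) 0 ≤ (Iic t).indicator (fun _ => h) x := by
        intro x
        rcases le_or_gt x t with hx | hx
        · rw [indicator_of_mem (mem_Iic.mpr hx)]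
          have : t - x ≤ (t - h - x) + h := by linarith
          have h1 : max (t - x) 0 ≤ max (t - h - x) 0 + h :=
            max_le (by linarith [le_max_left (t - h - x) (0:ℝ)])
              (by linarith [le_max_right (t - h - x) (0:ℝ)])
          linarith
        · rw [indicator_of_notMem (by simpa using hx)]
          have h1 : max (t - x) 0 = 0 := max_eq_right (by linarith)
          have h2 : (0:ℝ) ≤ max (t - h - x) 0 := le_max_right _ _
          linarith
      have := integral_mono ((hWint t).sub (hWint (t - h))) (hind_int t h)
        (fun x => hpt x)
      simp only [Pi.sub_apply] at this
      rwa [integral_sub (hWint t) (hWint (t - h)), hIi] at this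
    · have hpt : ∀ x, (Iic t).indicator (fun _ => h) x ≤ max (t + h - x) 0 - max (t - x) 0 := by
        intro x
        rcases le_or_gt x t with hx | hx
        · rw [indicator_of_mem (mem_Iic.mpr hx)]
          rw [max_eq_left (by linarith : (0:ℝ) ≤ t + h - x), max_eq_left (by linarith : (0:ℝ) ≤ t - x)]
          linarith
        · rw [indicator_of_notMem (by simpa using hx)]
          rw [max_eq_right (by linarith : t - x ≤ 0)]
          simp [le_max_right]
      have := integral_mono (hind_int t h) ((hWint (t + h)).sub (hWint t))
        (fun x => hpt x)
      simp only [Pi.sub_apply] at this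
      rwa [integral_sub (hWint (t + h)) (hWint t), hIi] at this
  intro t ht
  have upper : F t ≤ t := by
    have hup : ∀ h, h ∈ Ioo (0:ℝ) (1 - t) → F t ≤ t + h/2 := by
      intro h hh
      have h2 := (hFub t h hh.1).2
      have e1 : W (t + h) = (t + h)^2/2 :=
        hWeq _ ⟨by linarith [ht.1, hh.1], by linarith [hh.2]⟩
      have e2 : W t = t^2/2 := hWeq _ ht
      rw [e1, e2] at h2
      nlinarith [hh.1]
    by_contra hc
    push_neg at hc
    have h1t : 0 < 1 - t := by linarith [ht.2]
    set h := min (F t - t) ((1 - t)/2) with hhdef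
    have hh : h ∈ Ioo (0:ℝ) (1 - t) := by
      constructor
      · apply lt_min (by linarith) (by linarith)
      · calc h ≤ (1 - t)/2 := min_le_right _ _
          _ < 1 - t := by linarith
    have := hup h hh
    have hle2 : h ≤ F t - t := min_le_left _ _
    have : F t ≤ t + (F t - t)/2 := by
      calc F t ≤ t + h/2 := this
        _ ≤ t + (F t - t)/2 := by linarith
    linarith
  have lower : t ≤ F t := by
    have hlo : ∀ h, h ∈ Ioo (0:ℝ) t → t - h/2 ≤ F t := by
      intro h hh
      have h2 := (hFub t h hh.1).1
      have e1 : W (t - h) = (t - h)^2/2 :=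
        hWeq _ ⟨by linarith [hh.2], by linarith [ht.2, hh.1]⟩
      have e2 : W t = t^2/2 := hWeq _ ht
      rw [e1, e2] at h2
      nlinarith [hh.1]
    by_contra hc
    push_neg at hc
    set h := min (t - F t) (t/2) with hhdef
    have hh : h ∈ Ioo (0:ℝ) t := by
      constructor
      · apply lt_min (by linarith) (by linarith [ht.1])
      · calc h ≤ t/2 := min_le_right _ _
          _ < t := by linarith [ht.1]
    have := hlo h hh
    have hle2 : h ≤ t - F t := min_le_left _ _
    linarith
  linarith

lemma aux5 (ν : Measure ℝ) [IsProbabilityMeasure ν]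
    (hsupp : ν (Icc (0:ℝ) 1)ᶜ = 0) (hpos : ν (Iic (0:ℝ)) = 0)
    (hF : ∀ t ∈ Ioo (0:ℝ) 1, (ν (Iic t)).toReal = t) :
    ν = volume.restrict (Icc (0:ℝ) 1) := by
  refine Measure.ext_of_Iic ν _ (fun a => ?_)
  rw [Measure.restrict_apply measurableSet_Iic]
  rcases le_or_gt a 0 with ha | ha
  · have h1 : ν (Iic a) = 0 := measure_mono_null (Iic_subset_Iic.mpr ha) hpos
    have h2 : volume (Iic a ∩ Icc 0 1) = 0 := by
      have hsub : Iic a ∩ Icc 0 1 ⊆ Icc (0:ℝ) a := fun x hx => ⟨hx.2.1, hx.1⟩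
      refine measure_mono_null hsub ?_
      rw [Real.volume_Icc]
      simp [ha]
    rw [h1, h2]
  rcases lt_or_ge a 1 with ha1 | ha1
  · have hL : ν (Iic a) = ENNReal.ofReal a := by
      rw [← ENNReal.ofReal_toReal (measure_ne_top ν (Iic a)), hF a ⟨ha, ha1⟩]
    have hset : Iic a ∩ Icc 0 1 = Icc 0 a := by
      ext x
      simp only [mem_inter_iff, mem_Iic, mem_Icc]
      constructor
      · rintro ⟨h1, h2, h3⟩; exact ⟨h2, h1⟩
      · rintro ⟨h1, h2⟩; exact ⟨h2, h1, by linarith⟩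
    rw [hL, hset, Real.volume_Icc]
    simp
  · have hIcc1 : ν (Icc (0:ℝ) 1) = 1 := by
      have := measure_add_measure_compl (measurableSet_Icc : MeasurableSet (Icc (0:ℝ) 1)) (μ := ν)
      rw [hsupp, add_zero, measure_univ] at this
      exact this
    have hL : ν (Iic a) = 1 := le_antisymm prob_le_one
      (by rw [← hIcc1]; exact measure_mono (fun x hx => le_trans hx.2 ha1))
    have hset : Iic a ∩ Icc 0 1 = Icc (0:ℝ) 1 :=
      inter_eq_self_of_subset_right (fun x hx => le_trans hx.2 ha1)
    rw [hL, hset, Real.volume_Icc]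
    simp

lemma key_uniform (ν : Measure ℝ) [IsProbabilityMeasure ν]
    (hsupp : ν (Icc (0:ℝ) 1)ᶜ = 0) (hpos : ν (Iic (0:ℝ)) = 0)
    (hmean : ∫ x, x ∂ν = 1/2)
    (hW : ∀ t ∈ Icc (0:ℝ) 1, ∫ x, max (t - x) 0 ∂ν ≤ t^2/2)
    (hlogint : Integrable (fun x => -Real.log x) ν)
    (hlog : ∫ x, -Real.log x ∂ν = 1) :
    ν = volume.restrict (Icc (0:ℝ) 1) := by
  have hae : ∀ᵐ x ∂ν, x ∈ Ioc (0:ℝ) 1 := by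
    have h1 : ∀ᵐ x ∂ν, x ∈ Icc (0:ℝ) 1 := mem_ae_iff.mpr hsupp
    have h2 : ∀ᵐ x ∂ν, ¬ x ≤ (0:ℝ) := by
      rw [ae_iff]
      simp only [not_not]
      exact hpos
    filter_upwards [h1, h2] with x hx1 hx2
    exact ⟨lt_of_not_ge hx2, hx1.2⟩
  have hWint : ∀ t : ℝ, Integrable (fun x => max (t - x) 0) ν := by
    intro t
    refine Integrable.mono' (integrable_const (|t| + 1)) ?_ ?_
    · exact ((measurable_const.sub measurable_id).max measurable_const).aestronglyMeasurable
    · filter_upwards [hae] with x hx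
      rw [Real.norm_eq_abs, abs_of_nonneg (le_max_right _ _)]
      refine max_le (by cases abs_cases t with | inl h => linarith [hx.1] | inr h => linarith [hx.1]) (by positivity)
  have hidint : Integrable (fun x : ℝ => x) ν := by
    refine Integrable.mono' (integrable_const 1) measurable_id.aestronglyMeasurable ?_
    filter_upwards [hae] with x hx
    rw [Real.norm_eq_abs, abs_of_nonneg hx.1.le]
    exact hx.2
  have hWlip : LipschitzWith 1 (fun t => ∫ x, max (t - x) 0 ∂ν) := by
    apply LipschitzWith.of_dist_le_mul
    intro s t
    rw [Real.dist_eq, Real.dist_eq, ← integral_sub (hWint s) (hWint t)]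
    calc |∫ x, (max (s - x) 0 - max (t - x) 0) ∂ν|
        ≤ ∫ x, |max (s - x) 0 - max (t - x) 0| ∂ν := by
          simpa [Real.norm_eq_abs] using
            norm_integral_le_integral_norm (fun x => max (s - x) 0 - max (t - x) 0) (μ := ν)
      _ ≤ ∫ _x, |s - t| ∂ν := by
          refine integral_mono ((hWint s).sub (hWint t)).abs (integrable_const _) ?_
          intro x
          simpa using abs_max_sub_max_le_abs (s - x) (t - x) 0
      _ = 1 * |s - t| := by simp
  have hWnonneg : ∀ t : ℝ, 0 ≤ ∫ x, max (t - x) 0 ∂ν :=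
    fun t => integral_nonneg (fun x => le_max_right _ _)
  have key1 := aux2 ν hae hWint hidint hlogint hmean hlog
  have hWeq := aux3 (fun t => ∫ x, max (t - x) 0 ∂ν) hWlip.continuous hWnonneg hW key1
  have hF := aux4 ν hWint hWeq
  exact aux5 ν hsupp hpos hF

/-- If `P` is sub-uniform with `P > 0` a.s. and
`E[−log P] = 1 = E[−log U]`, then `P` is uniformly distributed on `[0,1]`. -/
theorem subuniform_log_mean_eq_one_implies_uniform
    {Ω : Type*} [MeasurableSpace Ω] (μ : Measure Ω) [IsProbabilityMeasure μ]
    (P : Ω → ℝ) (hPmeas : Measurable P) (hPmem : ∀ ω, P ω ∈ Icc (0 : ℝ) 1)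
    (hPpos : ∀ᵐ ω ∂μ, 0 < P ω)
    (hcx : ∀ h : ℝ → ℝ, ConvexOn ℝ Set.univ h →
      Integrable (fun ω : Ω => h (P ω)) μ → IntegrableOn h (Icc (0 : ℝ) 1) volume →
      ∫ ω, h (P ω) ∂μ ≤ ∫ u in Icc (0 : ℝ) 1, h u)
    (hint : Integrable (fun ω : Ω => -Real.log (P ω)) μ)
    (hmean : ∫ ω, -Real.log (P ω) ∂μ = 1) :
    Measure.map P μ = volume.restrict (Icc (0 : ℝ) 1) := by
  set ν := Measure.map P μ with hνdef
  haveI : IsProbabilityMeasure ν := Measure.isProbabilityMeasure_map hPmeas.aemeasurable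
  have hsupp : ν (Icc (0:ℝ) 1)ᶜ = 0 := by
    rw [hνdef, Measure.map_apply hPmeas measurableSet_Icc.compl]
    have : P ⁻¹' (Icc (0:ℝ) 1)ᶜ = ∅ := by
      ext ω
      simp only [mem_preimage, mem_compl_iff, mem_empty_iff_false, iff_false, not_not]
      exact hPmem ω
    rw [this, measure_empty]
  have hpos : ν (Iic (0:ℝ)) = 0 := by
    rw [hνdef, Measure.map_apply hPmeas measurableSet_Iic]
    rw [ae_iff] at hPpos
    refine measure_mono_null (fun ω hω => ?_) hPpos
    simpa using hω
  have hPint : Integrable P μ := by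
    refine Integrable.mono' (integrable_const 1) hPmeas.aestronglyMeasurable ?_
    refine Filter.Eventually.of_forall fun ω => ?_
    rw [Real.norm_eq_abs, abs_of_nonneg (hPmem ω).1]
    exact (hPmem ω).2
  have hmeanP : ∫ ω, P ω ∂μ = 1/2 := by
    have hcvx1 : ConvexOn ℝ Set.univ (fun x : ℝ => x) := by
      simpa using convexOn_affine 1 0
    have hcvx2 : ConvexOn ℝ Set.univ (fun x : ℝ => -x) := by
      have := convexOn_affine (-1) 0
      simp only [neg_one_mul, add_zero] at this
      exact this
    have hio1 : IntegrableOn (fun x : ℝ => x) (Icc (0:ℝ) 1) volume :=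
      continuous_id.integrableOn_Icc
    have hio2 : IntegrableOn (fun x : ℝ => -x) (Icc (0:ℝ) 1) volume := hio1.neg
    have h1 := hcx (fun x => x) hcvx1 hPint hio1
    have h2 := hcx (fun x => -x) hcvx2 hPint.neg hio2
    rw [integral_id_Icc] at h1
    have e2 : ∫ u in Icc (0:ℝ) 1, -u = -(1/2) := by
      rw [integral_neg, integral_id_Icc]
    rw [e2, integral_neg] at h2
    linarith
  have hWμ : ∀ t ∈ Icc (0:ℝ) 1, ∫ x, max (t - x) 0 ∂ν ≤ t^2/2 := by
    intro t ht
    have hint1 : Integrable (fun ω => max (t - P ω) 0) μ := by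
      refine Integrable.mono' (integrable_const (|t| + 1)) ?_ ?_
      · exact ((measurable_const.sub hPmeas).max measurable_const).aestronglyMeasurable
      · refine Filter.Eventually.of_forall fun ω => ?_
        rw [Real.norm_eq_abs, abs_of_nonneg (le_max_right _ _)]
        refine max_le ?_ (by positivity)
        have := (hPmem ω).1
        calc t - P ω ≤ t := by linarith
          _ ≤ |t| := le_abs_self t
          _ ≤ |t| + 1 := by linarith
    have hio : IntegrableOn (fun x : ℝ => max (t - x) 0) (Icc (0:ℝ) 1) volume :=
      ((continuous_const.sub continuous_id).max continuous_const).integrableOn_Icc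
    have h := hcx (fun x => max (t - x) 0) (convexOn_wedge t) hint1 hio
    rw [wedge_integral_Icc ht.1 ht.2] at h
    have hasm : AEStronglyMeasurable (fun x : ℝ => max (t - x) 0) (Measure.map P μ) :=
      ((measurable_const.sub measurable_id).max measurable_const).aestronglyMeasurable
    rw [hνdef, integral_map hPmeas.aemeasurable hasm]
    exact h
  have hmeanν : ∫ x, x ∂ν = 1/2 := by
    have hasm : AEStronglyMeasurable (fun x : ℝ => x) (Measure.map P μ) :=
      measurable_id.aestronglyMeasurable
    rw [hνdef, integral_map hPmeas.aemeasurable hasm]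
    exact hmeanP
  have hlogint : Integrable (fun x => -Real.log x) ν := by
    rw [hνdef]
    exact (integrable_map_measure (Real.measurable_log.neg).aestronglyMeasurable
      hPmeas.aemeasurable).mpr hint
  have hlogν : ∫ x, -Real.log x ∂ν = 1 := by
    have hasm : AEStronglyMeasurable (fun x : ℝ => -Real.log x) (Measure.map P μ) :=
      (Real.measurable_log.neg).aestronglyMeasurable
    rw [hνdef, integral_map hPmeas.aemeasurable hasm]
    exact hmean
  exact key_uniform ν hsupp hpos hmeanν hWμ hlogint hlogν
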